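/- Let (H,R,χ) be a pre-Cartier quasitriangular bialgebra. Then the infinitesimal quantum Yang–Baxter equation holds: R₁₂χ₁₂R₁₃R₂₃ + R₁₂R₁₃χ₁₃R₂₃ + R₁₂R₁₃R₂₃χ₂₃ = R₂₃χ₂₃R₁₃R₁₂ + R₂₃R₁₃χ₁₃R₁₂ + R₂₃R₁₃R₁₂χ₁₂. -/

import Mathlib

open scoped TensorProduct

noncomputable section

variable (k H : Type*) [CommRing k] [Ring H] [Bialgebra k H]

/-- leg embedding `a ⊗ b ↦ a ⊗ b ⊗ 1` into `H ⊗ (H ⊗ H)`. -/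
def leg12 : H ⊗[k] H →ₐ[k] H ⊗[k] (H ⊗[k] H) :=
  Algebra.TensorProduct.map (AlgHom.id k H) Algebra.TensorProduct.includeLeft

/-- leg embedding `a ⊗ b ↦ 1 ⊗ a ⊗ b`. -/
def leg23 : H ⊗[k] H →ₐ[k] H ⊗[k] (H ⊗[k] H) :=
  Algebra.TensorProduct.includeRight

/-- leg embedding `a ⊗ b ↦ a ⊗ 1 ⊗ b`. -/
def leg13 : H ⊗[k] H →ₐ[k] H ⊗[k] (H ⊗[k] H) :=
  Algebra.TensorProduct.map (AlgHom.id k H) Algebra.TensorProduct.includeRight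

/-- `(Id ⊗ Δ)` as an algebra map `H ⊗ H → H ⊗ (H ⊗ H)`. -/
def idComul : H ⊗[k] H →ₐ[k] H ⊗[k] (H ⊗[k] H) :=
  Algebra.TensorProduct.map (AlgHom.id k H) (Bialgebra.comulAlgHom k H)

/-- `(Δ ⊗ Id)` as an algebra map `H ⊗ H → H ⊗ (H ⊗ H)` (after reassociation). -/
def comulId : H ⊗[k] H →ₐ[k] H ⊗[k] (H ⊗[k] H) :=
  (Algebra.TensorProduct.assoc k k k H H H).toAlgHom.comp
    (Algebra.TensorProduct.map (Bialgebra.comulAlgHom k H) (AlgHom.id k H))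

/-- the flip `a ⊗ b ↦ b ⊗ a` as an algebra map. -/
def swapT : H ⊗[k] H →ₐ[k] H ⊗[k] H := (Algebra.TensorProduct.comm k H H).toAlgHom

/-- A quasitriangular structure on the bialgebra `H`. -/
structure QT where
  R : H ⊗[k] H
  Rinv : H ⊗[k] H
  mul_inv : R * Rinv = 1
  inv_mul : Rinv * R = 1
  quasi_cocomm : ∀ h : H, swapT k H (Coalgebra.comul (R := k) h) * R = R * Coalgebra.comul (R := k) h
  hex1 : idComul k H R = leg13 k H R * leg12 k H R
  hex2 : comulId k H R = leg13 k H R * leg23 k H R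

/-- A pre-Cartier quasitriangular bialgebra structure on `H`. -/
structure PreCartier extends QT k H where
  χ : H ⊗[k] H
  chi_comm : ∀ h : H, χ * Coalgebra.comul (R := k) h = Coalgebra.comul (R := k) h * χ
  chi_hex1 : idComul k H χ = leg12 k H χ + leg12 k H Rinv * leg13 k H χ * leg12 k H R
  chi_hex2 : comulId k H χ = leg23 k H χ + leg23 k H Rinv * leg13 k H χ * leg23 k H R


/-- the swap of the first two legs of `H ⊗ (H ⊗ H)` as an algebra map. -/
def tau12 : H ⊗[k] (H ⊗[k] H) →ₐ[k] H ⊗[k] (H ⊗[k] H) :=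
  ((Algebra.TensorProduct.assoc k k k H H H).toAlgHom.comp
    (Algebra.TensorProduct.map (Algebra.TensorProduct.comm k H H).toAlgHom
      (AlgHom.id k H))).comp (Algebra.TensorProduct.assoc k k k H H H).symm.toAlgHom

/-- `(Δᵒᵖ ⊗ Id)` (reassociated). -/
def comulIdOp : H ⊗[k] H →ₐ[k] H ⊗[k] (H ⊗[k] H) :=
  (tau12 k H).comp (comulId k H)

lemma tau12_tmul (a b c : H) :
    tau12 k H (a ⊗ₜ (b ⊗ₜ c)) = b ⊗ₜ[k] (a ⊗ₜ[k] c) := by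
  simp [tau12, Algebra.TensorProduct.assoc_symm_tmul, Algebra.TensorProduct.assoc_tmul]

lemma tau12_leg13 (x : H ⊗[k] H) : tau12 k H (leg13 k H x) = leg23 k H x := by
  induction x using TensorProduct.induction_on with
  | zero => simp
  | tmul a b => simp [leg13, leg23, tau12_tmul]
  | add x y hx hy => simp [map_add, hx, hy]

lemma tau12_leg23 (x : H ⊗[k] H) : tau12 k H (leg23 k H x) = leg13 k H x := by
  induction x using TensorProduct.induction_on with
  | zero => simp
  | tmul a b => simp [leg13, leg23, tau12_tmul]
  | add x y hx hy => simp [map_add, hx, hy]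

lemma tau12_leg12 (x : H ⊗[k] H) :
    tau12 k H (leg12 k H x) = leg12 k H (swapT k H x) := by
  induction x using TensorProduct.induction_on with
  | zero => simp
  | tmul a b => simp [leg12, swapT, tau12_tmul]
  | add x y hx hy => simp [map_add, hx, hy]

lemma leg12_mul_rb (x : H ⊗[k] H) (b : H) :
    leg12 k H x * ((1 : H) ⊗ₜ[k] ((1 : H) ⊗ₜ[k] b)) =
      ((1 : H) ⊗ₜ[k] ((1 : H) ⊗ₜ[k] b)) * leg12 k H x := by
  induction x using TensorProduct.induction_on with
  | zero => simp
  | tmul u v => simp [leg12, Algebra.TensorProduct.tmul_mul_tmul]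
  | add x y hx hy => simp [map_add, add_mul, mul_add, hx, hy]

lemma assoc_tmul_eq (x : H ⊗[k] H) (b : H) :
    (Algebra.TensorProduct.assoc k k k H H H) (x ⊗ₜ[k] b) =
      leg12 k H x * ((1 : H) ⊗ₜ[k] ((1 : H) ⊗ₜ[k] b)) := by
  induction x using TensorProduct.induction_on with
  | zero => simp
  | tmul u v =>
      simp [leg12, Algebra.TensorProduct.assoc_tmul, Algebra.TensorProduct.tmul_mul_tmul]
  | add x y hx hy =>
      rw [TensorProduct.add_tmul, map_add, hx, hy, map_add, add_mul]

lemma comulId_tmul (a b : H) :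
    comulId k H (a ⊗ₜ[k] b) =
      leg12 k H (Coalgebra.comul (R := k) a) * ((1 : H) ⊗ₜ[k] ((1 : H) ⊗ₜ[k] b)) := by
  simp only [comulId, AlgHom.coe_comp, Function.comp_apply, Algebra.TensorProduct.map_tmul,
    AlgHom.coe_id, id_eq, Bialgebra.comulAlgHom_apply, AlgEquiv.toAlgHom_eq_coe,
    AlgHom.coe_coe]
  exact assoc_tmul_eq k H _ b

lemma comulIdOp_tmul (a b : H) :
    comulIdOp k H (a ⊗ₜ[k] b) =
      leg12 k H (swapT k H (Coalgebra.comul (R := k) a)) *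
        ((1 : H) ⊗ₜ[k] ((1 : H) ⊗ₜ[k] b)) := by
  have h1 : tau12 k H ((1 : H) ⊗ₜ[k] ((1 : H) ⊗ₜ[k] b)) =
      (1 : H) ⊗ₜ[k] ((1 : H) ⊗ₜ[k] b) := tau12_tmul k H 1 1 b
  simp only [comulIdOp, AlgHom.coe_comp, Function.comp_apply, comulId_tmul, map_mul,
    tau12_leg12, h1]

lemma chi_comm_leg12 (P : PreCartier k H) (x : H ⊗[k] H) :
    leg12 k H P.χ * comulId k H x = comulId k H x * leg12 k H P.χ := by
  induction x using TensorProduct.induction_on with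
  | zero => simp
  | tmul a b =>
      rw [comulId_tmul, ← mul_assoc, ← map_mul, P.chi_comm a, map_mul, mul_assoc,
        leg12_mul_rb, mul_assoc]
  | add x y hx hy => simp [map_add, add_mul, mul_add, hx, hy]

lemma quasi_leg12 (P : PreCartier k H) (x : H ⊗[k] H) :
    leg12 k H P.R * comulId k H x = comulIdOp k H x * leg12 k H P.R := by
  induction x using TensorProduct.induction_on with
  | zero => simp
  | tmul a b =>
      rw [comulId_tmul, ← mul_assoc, ← map_mul]
      rw [show P.R * Coalgebra.comul (R := k) a =
        swapT k H (Coalgebra.comul (R := k) a) * P.R from (P.quasi_cocomm a).symm]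
      rw [map_mul, mul_assoc, leg12_mul_rb, ← mul_assoc, comulIdOp_tmul]
  | add x y hx hy => simp [map_add, add_mul, mul_add, hx, hy]

/-- the infinitesimal quantum Yang–Baxter equation holds for every
pre-Cartier quasitriangular bialgebra `(H, R, χ)`. -/
theorem infinitesimal_QYB (P : PreCartier k H) :
    leg12 k H P.R * leg12 k H P.χ * leg13 k H P.R * leg23 k H P.R +
      leg12 k H P.R * leg13 k H P.R * leg13 k H P.χ * leg23 k H P.R +
      leg12 k H P.R * leg13 k H P.R * leg23 k H P.R * leg23 k H P.χ =
    leg23 k H P.R * leg23 k H P.χ * leg13 k H P.R * leg12 k H P.R +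
      leg23 k H P.R * leg13 k H P.R * leg13 k H P.χ * leg12 k H P.R +
      leg23 k H P.R * leg13 k H P.R * leg12 k H P.R * leg12 k H P.χ := by

  have hRchi : comulId k H (P.R * P.χ) =
      leg13 k H P.R * leg23 k H P.R * leg23 k H P.χ +
        leg13 k H P.R * leg13 k H P.χ * leg23 k H P.R := by
    rw [map_mul, P.hex2, P.chi_hex2, mul_add]
    congr 1
    rw [show leg13 k H P.R * leg23 k H P.R *
        (leg23 k H P.Rinv * leg13 k H P.χ * leg23 k H P.R) =
      leg13 k H P.R * (leg23 k H P.R * leg23 k H P.Rinv) *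
        (leg13 k H P.χ * leg23 k H P.R) by simp only [mul_assoc]]
    rw [← map_mul, P.mul_inv, map_one, mul_one, mul_assoc]
  have hOpR : comulIdOp k H P.R = leg23 k H P.R * leg13 k H P.R := by
    rw [comulIdOp, AlgHom.coe_comp, Function.comp_apply, P.hex2, map_mul,
      tau12_leg13, tau12_leg23]
  have hOpRchi : comulIdOp k H (P.R * P.χ) =
      leg23 k H P.R * leg13 k H P.R * leg13 k H P.χ +
        leg23 k H P.R * leg23 k H P.χ * leg13 k H P.R := by
    rw [comulIdOp, AlgHom.coe_comp, Function.comp_apply, hRchi, map_add]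
    simp only [map_mul, tau12_leg13, tau12_leg23]
  have key : leg12 k H P.R * leg12 k H P.χ * leg13 k H P.R * leg23 k H P.R +
      leg12 k H P.R * leg13 k H P.R * leg13 k H P.χ * leg23 k H P.R +
      leg12 k H P.R * leg13 k H P.R * leg23 k H P.R * leg23 k H P.χ
      = leg12 k H P.R * (leg12 k H P.χ * comulId k H P.R) +
        leg12 k H P.R * comulId k H (P.R * P.χ) := by
    rw [hRchi, P.hex2]
    simp only [mul_add, mul_assoc]
    abel
  rw [key, chi_comm_leg12 k H P P.R, ← mul_assoc, quasi_leg12 k H P P.R,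
    quasi_leg12 k H P (P.R * P.χ), hOpR, hOpRchi]
  simp only [add_mul, mul_add, mul_assoc]
  abel

end
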